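/- Corollary (of Theorems 3.7 and 4.2): Suppose in addition that G is locally finite (every vertex has only finitely many neighbors). Then for every vertex x₀ ∈ V there exists a two-way infinite family w : ℤ → (ℕ → V) of sequences such that each w(i) is not limitedly distant from any constant sequence, for all i < j and every m ∈ ℕ one has {n : d(w(i)(n), x₀) + m ≤ d(w(j)(n), x₀)} ∈ ℱ, and for i ≠ j the sequences w(i) and w(j) are not limitedly distant. In other words, whenever G is locally finite, the enlargement *G possesses a two-way infinite sequence of distinct galaxies totally ordered according to their closeness to the principal galaxy. -/
import Mathlib

open SimpleGraph

lemma walk_interm' {V : Type*} {G : SimpleGraph V} (hc : G.Connected) {a b : V}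
    (p : G.Walk a b) : ∀ k, k ≤ p.length →
      ∃ v : V, G.dist a v ≤ k ∧ G.dist v b + k ≤ p.length := by
  induction p with
  | nil =>
    intro k hk
    simp only [SimpleGraph.Walk.length_nil, Nat.le_zero] at hk
    subst hk
    rename_i u
    exact ⟨u, by simp, by simp⟩
  | @cons x y z h q ih =>
    intro k hk
    cases k with
    | zero => exact ⟨x, le_of_eq (by simp), by simpa using SimpleGraph.dist_le (.cons h q)⟩
    | succ k' =>
      obtain ⟨v, h1, h2⟩ := ih k' (by simpa using hk)
      refine ⟨v, ?_, ?_⟩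
      · calc G.dist x v ≤ G.dist x y + G.dist y v := hc.dist_triangle
          _ ≤ 1 + k' := by
              gcongr
              · simpa using SimpleGraph.dist_le (G := G) (.cons h .nil)
          _ = k' + 1 := by omega
      · simp only [SimpleGraph.Walk.length_cons]; omega

lemma exists_dist_eq' {V : Type*} {G : SimpleGraph V} (hc : G.Connected) {a b : V}
    (k : ℕ) (hk : k ≤ G.dist a b) : ∃ v : V, G.dist a v = k := by
  obtain ⟨p, hp⟩ := hc.exists_walk_length_eq_dist a b
  obtain ⟨v, h1, h2⟩ := walk_interm' hc p k (by omega)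
  refine ⟨v, le_antisymm h1 ?_⟩
  have := hc.dist_triangle (u := a) (v := v) (w := b)
  omega

lemma ball_finite {V : Type*} {G : SimpleGraph V} (hc : G.Connected)
    (hlf : ∀ v : V, (G.neighborSet v).Finite) (x₀ : V) :
    ∀ n : ℕ, {v : V | G.dist x₀ v ≤ n}.Finite := by
  intro n
  induction n with
  | zero =>
    apply Set.Finite.subset (Set.finite_singleton x₀)
    intro v hv
    simp only [Set.mem_setOf_eq, Nat.le_zero] at hv
    simp [(hc.dist_eq_zero_iff.mp ((SimpleGraph.dist_comm ..).trans hv)).symm]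
  | succ n ih =>
    apply Set.Finite.subset (ih.union (Set.Finite.biUnion ih
      (fun v _ => (hlf v).insert v)))
    intro u hu
    simp only [Set.mem_setOf_eq] at hu
    rcases Nat.lt_or_ge (G.dist x₀ u) (n+1) with h | h
    · exact Or.inl (by simpa using Nat.lt_succ_iff.mp h)
    · have hd : G.dist x₀ u = n + 1 := le_antisymm hu h
      obtain ⟨p, hp⟩ := hc.exists_walk_length_eq_dist x₀ u
      obtain ⟨v, h1, h2⟩ := walk_interm' hc p n (by omega)
      right
      refine Set.mem_biUnion h1 ?_
      have hvu : G.dist v u ≤ 1 := by omega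
      rcases Nat.le_one_iff_eq_zero_or_eq_one.mp hvu with h0 | h1'
      · simp [hc.dist_eq_zero_iff.mp h0]
      · exact Set.mem_insert_of_mem _ (SimpleGraph.dist_eq_one_iff_adj.mp h1')

lemma D_nonneg {i : ℤ} {n : ℕ} (hn : i.natAbs ≤ n) :
    (((n : ℤ) * ((n : ℤ) + i)).toNat : ℤ) = (n : ℤ) * ((n : ℤ) + i) := by
  have h1 : (0:ℤ) ≤ (n:ℤ) + i := by omega
  exact Int.toNat_of_nonneg (mul_nonneg (by positivity) h1)

lemma D_ge {i : ℤ} {n : ℕ} (hn : i.natAbs + 1 ≤ n) :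
    n ≤ ((n : ℤ) * ((n : ℤ) + i)).toNat := by
  have h1 : (1:ℤ) ≤ (n:ℤ) + i := by omega
  have h2 : (n:ℤ) ≤ (n:ℤ) * ((n:ℤ) + i) := by nlinarith [Int.natCast_nonneg n]
  omega

lemma D_gap {i j : ℤ} {n : ℕ} (hij : i < j) (hn : i.natAbs + j.natAbs ≤ n) :
    ((n : ℤ) * ((n : ℤ) + i)).toNat + n ≤ ((n : ℤ) * ((n : ℤ) + j)).toNat := by
  have h0 : (0:ℤ) ≤ (n:ℤ) + i := by omega
  have h2 : (n:ℤ) * ((n:ℤ) + i) + n ≤ (n:ℤ) * ((n:ℤ) + j) := by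
    nlinarith [Int.natCast_nonneg n]
  have h3 : (0:ℤ) ≤ (n:ℤ) * ((n:ℤ) + i) := mul_nonneg (by positivity) h0
  omega

/-- Corollary of Theorems 3.7 and 4.2: if the connected infinite graph `G` is
locally finite, then the enlargement `*G` possesses a two-way infinite
sequence of distinct galaxies totally ordered according to their closeness to
the principal galaxy. -/
theorem locally_finite_two_way_infinite_galaxies {V : Type*} [Infinite V]
    (G : SimpleGraph V) (hG : G.Connected)
    (hlf : ∀ v : V, (G.neighborSet v).Finite)
    (ℱ : Ultrafilter ℕ) (hF : ∀ a : ℕ, ℱ ≠ pure a) :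
    ∀ x₀ : V, ∃ w : ℤ → (ℕ → V),
      (∀ i : ℤ, ∀ c : V, ∀ k : ℕ, {n : ℕ | G.dist (w i n) c ≤ k} ∉ ℱ) ∧
      (∀ i j : ℤ, i < j → ∀ m : ℕ,
        {n : ℕ | G.dist (w i n) x₀ + m ≤ G.dist (w j n) x₀} ∈ ℱ) ∧
      (∀ i j : ℤ, i ≠ j →
        ¬ ∃ k : ℕ, {n : ℕ | G.dist (w i n) (w j n) ≤ k} ∈ ℱ) := by
  intro x₀
  have hex : ∀ m : ℕ, ∃ v : V, G.dist x₀ v = m := by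
    intro m
    obtain ⟨u, hu⟩ := Set.Infinite.nonempty
      ((Set.infinite_univ (α := V)).diff (ball_finite hG hlf x₀ m))
    have h2 : m < G.dist x₀ u := by
      have := hu.2; simp only [Set.mem_setOf_eq, not_le] at this; exact this
    exact exists_dist_eq' hG m h2.le
  choose φ hφ using hex
  have hfin_not : ∀ s : Set ℕ, s.Finite → s ∉ ℱ := by
    intro s hs hmem
    obtain ⟨a, -, h⟩ := Ultrafilter.eq_pure_of_finite_mem hs hmem
    exact hF a h
  have hcof : ∀ N : ℕ, {n : ℕ | N ≤ n} ∈ ℱ := by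
    intro N
    have hle : (ℱ : Filter ℕ) ≤ Filter.cofinite := by
      rcases ℱ.le_cofinite_or_eq_pure with h | ⟨a, ha⟩
      · exact h
      · exact absurd ha (hF a)
    apply hle
    simp only [Filter.mem_cofinite]
    apply Set.Finite.subset (Set.finite_lt_nat N)
    intro n hn
    simpa using hn
  set D : ℤ → ℕ → ℕ := fun i n => ((n : ℤ) * ((n : ℤ) + i)).toNat with hD
  have hdist : ∀ i n, G.dist x₀ (φ (D i n)) = D i n := fun i n => hφ _
  refine ⟨fun i n => φ (D i n), ?_, ?_, ?_⟩
  · -- not limitedly distant from constants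
    intro i c k hmem
    refine hfin_not _ (Set.Finite.subset (Set.finite_lt_nat
      (i.natAbs + k + G.dist x₀ c + 1)) ?_) hmem
    intro n hn
    simp only [Set.mem_setOf_eq] at hn ⊢
    by_contra hcon
    push_neg at hcon
    have h1 : n ≤ D i n := D_ge (by omega)
    have h2 : G.dist x₀ (φ (D i n)) ≤ G.dist x₀ c + G.dist c (φ (D i n)) :=
      hG.dist_triangle
    have h3 : G.dist c (φ (D i n)) = G.dist (φ (D i n)) c :=
      SimpleGraph.dist_comm
    rw [hdist] at h2
    omega
  · -- ordering of galaxies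
    intro i j hij m
    refine Filter.mem_of_superset (hcof (i.natAbs + j.natAbs + m)) ?_
    intro n hn
    simp only [Set.mem_setOf_eq] at hn ⊢
    have hgap : D i n + n ≤ D j n := D_gap hij (by omega)
    have e1 : G.dist (φ (D i n)) x₀ = D i n := by
      rw [SimpleGraph.dist_comm]; exact hdist i n
    have e2 : G.dist (φ (D j n)) x₀ = D j n := by
      rw [SimpleGraph.dist_comm]; exact hdist j n
    rw [e1, e2]
    omega
  · -- distinct galaxies
    intro i j hij ⟨k, hmem⟩
    have key : ∀ i j : ℤ, i < j →
        {n : ℕ | G.dist (φ (D i n)) (φ (D j n)) ≤ k} ∉ ℱ := by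
      intro i j hij'
      refine hfin_not _ (Set.Finite.subset (Set.finite_lt_nat
        (i.natAbs + j.natAbs + k + 1)) ?_)
      intro n hn
      simp only [Set.mem_setOf_eq] at hn ⊢
      by_contra hcon
      push_neg at hcon
      have hgap : D i n + n ≤ D j n := D_gap hij' (by omega)
      have h2 : G.dist x₀ (φ (D j n)) ≤ G.dist x₀ (φ (D i n)) +
          G.dist (φ (D i n)) (φ (D j n)) := hG.dist_triangle
      rw [hdist, hdist] at h2
      omega
    rcases lt_or_gt_of_ne hij with h | h
    · exact key i j h hmem
    · refine key j i h ?_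
      convert hmem using 3 with n
      rw [SimpleGraph.dist_comm]
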